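/- arXiv:2007.15056 — 2 statements merged into one kernel-verified Lean document; each statement's English description precedes it below -/
import Mathlib

section
/- Let ā ≥ a̲ > 0, r > 0, and 0 < b < a̲/ā. Define h(τ) = [b ā - (a̲ - τ)(1 + r τ)]·[b + r (a̲ - τ)(1 + r τ)] - b³ τ. Then h has exactly one zero in the interval [0, a̲]. -/
set_option maxHeartbeats 1000000

/-- Key 4-variable lemma: C1 + C2 force `v ≥ b²(1+x)`. -/
private lemma pV (b s x v : ℝ) (hb : 0 < b) (hb1 : b < 1) (hs : 0 < s) (hx : 0 < x)
    (hv : v = b + s * (1 + x))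
    (hC2 : b * (x + s) * v ≤ s * (1 + x) * v + b ^ 3 * x) :
    b ^ 2 * (1 + x) ≤ v := by
  by_contra hlt
  push_neg at hlt
  have hsb : s < b ^ 2 := by
    by_contra hge
    push_neg at hge
    nlinarith [mul_nonneg hx.le (sub_nonneg.mpr hge)]
  have gap : 0 < x * (b ^ 2 - s) - (b - b ^ 2 + s) := by
    rw [hv] at hlt; nlinarith [hlt]
  -- C2 in polynomial form: g(x) ≤ 0
  have hg : s * (b - s) * x ^ 2 + (b ^ 2 * (1 - b) - s ^ 2 * (2 - b)) * x
      - s * (1 - b) * (b + s) ≤ 0 := by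
    rw [hv] at hC2; nlinarith [hC2]
  have hbs : 0 < b - s := by nlinarith
  have hP1 : 0 < s * (b - s) * (b - b ^ 2 + s) ^ 2
      + (b ^ 2 * (1 - b) - s ^ 2 * (2 - b)) * (b - b ^ 2 + s) * (b ^ 2 - s)
      - s * (1 - b) * (b + s) * (b ^ 2 - s) ^ 2 := by
    have h1 : s * (b - s) * (b - b ^ 2 + s) ^ 2
        + (b ^ 2 * (1 - b) - s ^ 2 * (2 - b)) * (b - b ^ 2 + s) * (b ^ 2 - s)
        - s * (1 - b) * (b + s) * (b ^ 2 - s) ^ 2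
        = b ^ 3 * (1 - b) * (s ^ 2 + b * (1 - b) * s + b ^ 2 * (1 - b)) := by ring
    rw [h1]
    have h2 : 0 < s ^ 2 + b * (1 - b) * s + b ^ 2 * (1 - b) := by nlinarith
    have h3 : 0 < b ^ 3 * (1 - b) := mul_pos (pow_pos hb 3) (by linarith)
    exact mul_pos h3 h2
  have hP2 : 0 ≤ 2 * (s * (b - s)) * (b - b ^ 2 + s)
      + (b ^ 2 * (1 - b) - s ^ 2 * (2 - b)) * (b ^ 2 - s) := by
    have h1 : 2 * (s * (b - s)) * (b - b ^ 2 + s)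
        + (b ^ 2 * (1 - b) - s ^ 2 * (2 - b)) * (b ^ 2 - s)
        = b * (b * s * (1 - b) + s ^ 2 * (b ^ 2 - s) + b ^ 3 * (1 - b)) := by ring
    rw [h1]
    have h2 : 0 ≤ b * s * (1 - b) + s ^ 2 * (b ^ 2 - s) + b ^ 3 * (1 - b) := by
      have k1 : 0 ≤ b * s * (1 - b) := by 
        have : (0:ℝ) < 1 - b := by linarith
        positivity
      have k2 : 0 ≤ s ^ 2 * (b ^ 2 - s) := mul_nonneg (sq_nonneg s) (by linarith)
      have k3 : 0 ≤ b ^ 3 * (1 - b) := by 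
        have : (0:ℝ) < 1 - b := by linarith
        positivity
      linarith
    exact mul_nonneg hb.le h2
  -- combine: g(x)·(b²−s)² decomposes positively
  have hid : (s * (b - s) * x ^ 2 + (b ^ 2 * (1 - b) - s ^ 2 * (2 - b)) * x
      - s * (1 - b) * (b + s)) * (b ^ 2 - s) ^ 2
      = s * (b - s) * (x * (b ^ 2 - s) - (b - b ^ 2 + s)) ^ 2
      + (2 * (s * (b - s)) * (b - b ^ 2 + s)
          + (b ^ 2 * (1 - b) - s ^ 2 * (2 - b)) * (b ^ 2 - s))
        * (x * (b ^ 2 - s) - (b - b ^ 2 + s))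
      + (s * (b - s) * (b - b ^ 2 + s) ^ 2
        + (b ^ 2 * (1 - b) - s ^ 2 * (2 - b)) * (b - b ^ 2 + s) * (b ^ 2 - s)
        - s * (1 - b) * (b + s) * (b ^ 2 - s) ^ 2) := by ring
  nlinarith [hid, hP1, mul_nonneg hP2 gap.le,
    mul_nonneg (mul_nonneg hs.le hbs.le) (sq_nonneg (x * (b ^ 2 - s) - (b - b ^ 2 + s))),
    mul_nonpos_of_nonpos_of_nonneg hg (sq_nonneg (b ^ 2 - s))]

/-- Easy chain: from C1 and `v ≥ b²(1+x)` get the target inequality. -/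
private lemma fclaim (b s x y v : ℝ) (hb : 0 < b) (hy : 0 < y) (hyx : y ≤ x + s)
    (hC1 : b ^ 3 < (1 - s) * v) (hV : b ^ 2 * (1 + x) ≤ v) :
    b ^ 3 < (1 - s + y) * (v - b ^ 2 * y) := by
  have hq : 1 - s + y ≤ 1 + x := by linarith
  have h1 : b ^ 2 * (1 - s + y) ≤ v := by nlinarith [hq, hV, sq_nonneg b]
  nlinarith [mul_nonneg hy.le (sub_nonneg.mpr h1), hC1]

/-- Uniqueness core: two distinct zeros lead to contradiction. -/
private lemma nodouble (abar alow b r t1 t2 : ℝ) (ha : 0 < alow) (haa : alow ≤ abar)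
    (hr : 0 < r) (hb : 0 < b) (hba : b * abar < alow)
    (ht1 : 0 ≤ t1) (h12 : t1 < t2) (ht2 : t2 ≤ alow)
    (e1 : (b * abar - (alow - t1) * (1 + r * t1)) * (b + r * ((alow - t1) * (1 + r * t1)))
        = b ^ 3 * t1)
    (e2 : (b * abar - (alow - t2) * (1 + r * t2)) * (b + r * ((alow - t2) * (1 + r * t2)))
        = b ^ 3 * t2) :
    False := by
  have habar : 0 < abar := lt_of_lt_of_le ha haa
  have hb1 : b < 1 := by nlinarith
  have ht1p : 0 < t1 := by
    rcases ht1.lt_or_eq with h0 | h0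
    · exact h0
    · exfalso
      rw [← h0] at e1
      nlinarith [e1, mul_pos (sub_pos.mpr hba) (by positivity : (0:ℝ) < b + r * alow)]
  have ht2p : 0 < t2 := lt_trans ht1p h12
  have hs1 : 0 < alow - t1 := by linarith
  have hs2 : 0 ≤ alow - t2 := by linarith
  have hu1pos : 0 < (alow - t1) * (1 + r * t1) := by
    have h1 : (0:ℝ) < 1 + r * t1 := by nlinarith
    positivity
  have hu2pos : 0 ≤ (alow - t2) * (1 + r * t2) := by
    have h1 : (0:ℝ) < 1 + r * t2 := by nlinarith
    positivity
  have hv1 : 0 < b + r * ((alow - t1) * (1 + r * t1)) := by positivity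
  have hv2 : 0 < b + r * ((alow - t2) * (1 + r * t2)) := by positivity
  -- w1 < t1 d1, hence C1
  have hw1 : b * abar - (alow - t1) * (1 + r * t1) < t1 * (1 - r * (alow - t1)) := by nlinarith
  have hC1 : b ^ 3 < (1 - r * (alow - t1)) * (b + r * ((alow - t1) * (1 + r * t1))) := by
    have h1 : b ^ 3 * t1 < t1 * ((1 - r * (alow - t1)) * (b + r * ((alow - t1) * (1 + r * t1)))) := by
      rw [← e1]; nlinarith [mul_lt_mul_of_pos_right hw1 hv1]
    nlinarith [h1, ht1p]
  -- C2 for pV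
  have hC2 : b * (r * t1 + r * (alow - t1)) * (b + r * ((alow - t1) * (1 + r * t1)))
      ≤ r * (alow - t1) * (1 + r * t1) * (b + r * ((alow - t1) * (1 + r * t1)))
        + b ^ 3 * (r * t1) := by
    nlinarith [e1, mul_nonneg (mul_nonneg (mul_nonneg hr.le hv1.le) hb.le) (sub_nonneg.mpr haa)]
  have hV : b ^ 2 * (1 + r * t1) ≤ b + r * ((alow - t1) * (1 + r * t1)) :=
    pV b (r * (alow - t1)) (r * t1) (b + r * ((alow - t1) * (1 + r * t1)))
      hb hb1 (by positivity) (by positivity) (by ring) hC2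
  -- f-claim
  have hf : b ^ 3 < (1 - r * (alow - t1) + r * t2)
      * (b + r * ((alow - t1) * (1 + r * t1)) - b ^ 2 * (r * t2)) := by
    have := fclaim b (r * (alow - t1)) (r * t1) (r * t2)
      (b + r * ((alow - t1) * (1 + r * t1))) hb (by positivity)
      (by nlinarith) (by linear_combination hC1) hV
    linarith [this]
  have hd1 : 0 < 1 - r * (alow - t1) := by
    by_contra hc
    push_neg at hc
    nlinarith [mul_nonpos_of_nonpos_of_nonneg hc hv1.le, pow_pos hb 3]
  have hEpos : 0 < 1 - r * (alow - t1) + r * t2 := by positivity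
  -- hT
  have hT : b ^ 3 * (r * t2) * (1 - r * (alow - t1) + r * t2)
      < ((1 - r * (alow - t1) + r * t2) * (b + r * ((alow - t1) * (1 + r * t1))) - b ^ 3)
        * (b + r * ((alow - t2) * (1 + r * t2))) := by
    have hEv : b ^ 2 * (r * t2) * (1 - r * (alow - t1) + r * t2)
        < (1 - r * (alow - t1) + r * t2) * (b + r * ((alow - t1) * (1 + r * t1))) - b ^ 3 := by
      nlinarith [hf]
    have hX : 0 ≤ (1 - r * (alow - t1) + r * t2) * (b + r * ((alow - t1) * (1 + r * t1))) - b ^ 3 := by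
      nlinarith [hEv, mul_pos (mul_pos (mul_pos (mul_pos hb hb) hr) ht2p) hEpos]
    nlinarith [mul_lt_mul_of_pos_left hEv hb, mul_nonneg (mul_nonneg hr.le hu2pos) hX]
  -- star equation (cancelled difference)
  have star : (1 - r * alow + r * (t1 + t2))
      * (r * ((alow - t1) * (1 + r * t1) + (alow - t2) * (1 + r * t2)) + b - r * (b * abar))
      = b ^ 3 := by
    have hne : t2 - t1 ≠ 0 := sub_ne_zero.mpr h12.ne'
    apply mul_left_cancel₀ hne
    linear_combination e2 - e1
  -- Z1
  have Z1 : (alow - b * abar + r * t1 * t2) * (b + r * ((alow - t2) * (1 + r * t2)))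
      = r * (b * abar - (alow - t1) * (1 + r * t1)) * t2 * (1 - r * (alow - t1) + r * t2) := by
    linear_combination t1 * star - e1
  -- final contradiction
  have h1 : t1 * (((1 - r * (alow - t1) + r * t2) * (b + r * ((alow - t1) * (1 + r * t1))) - b ^ 3)
      * (b + r * ((alow - t2) * (1 + r * t2))))
      > t1 * (b ^ 3 * (r * t2) * (1 - r * (alow - t1) + r * t2)) :=
    mul_lt_mul_of_pos_left hT ht1p
  have h2 : t1 * (((1 - r * (alow - t1) + r * t2) * (b + r * ((alow - t1) * (1 + r * t1))) - b ^ 3)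
      * (b + r * ((alow - t2) * (1 + r * t2))))
      = ((alow - b * abar + r * t1 * t2) * (b + r * ((alow - t2) * (1 + r * t2))))
        * (b + r * ((alow - t1) * (1 + r * t1))) := by
    linear_combination (b + r * ((alow - t2) * (1 + r * t2))) * e1
  have h3 : t1 * (b ^ 3 * (r * t2) * (1 - r * (alow - t1) + r * t2))
      = (r * (b * abar - (alow - t1) * (1 + r * t1)) * t2 * (1 - r * (alow - t1) + r * t2))
        * (b + r * ((alow - t1) * (1 + r * t1))) := by
    linear_combination (-(r * t2 * (1 - r * (alow - t1) + r * t2))) * e1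
  rw [h2, h3, Z1] at h1
  exact lt_irrefl _ h1

theorem stmt4 (abar alow b r : ℝ) (ha : 0 < alow) (haa : alow ≤ abar)
    (hr : 0 < r) (hb : 0 < b) (hba : b < alow / abar)
    (h : ℝ → ℝ)
    (hh : h = fun τ => (b * abar - (alow - τ) * (1 + r * τ)) *
      (b + r * (alow - τ) * (1 + r * τ)) - b ^ 3 * τ) :
    ∃! τ : ℝ, τ ∈ Set.Icc (0:ℝ) alow ∧ h τ = 0 := by
  have habar : 0 < abar := lt_of_lt_of_le ha haa
  have hba' : b * abar < alow := (lt_div_iff₀ habar).mp hba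
  -- continuity
  have hcont : ContinuousOn h (Set.Icc 0 alow) := by
    rw [hh]; fun_prop
  have h0 : h 0 ≤ 0 := by
    rw [hh]
    simp only
    nlinarith [mul_pos (sub_pos.mpr hba') (by positivity : (0:ℝ) < b + r * alow)]
  have hal : 0 ≤ h alow := by
    rw [hh]
    simp only
    have : b * abar - b * alow ≥ 0 := by nlinarith
    nlinarith [mul_pos hb hb, hba']
  have hiv := intermediate_value_Icc (le_of_lt ha) hcont
  have hmem : (0:ℝ) ∈ Set.Icc (h 0) (h alow) := ⟨h0, hal⟩
  obtain ⟨τ, hτmem, hτz⟩ := hiv hmem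
  refine ⟨τ, ⟨hτmem, hτz⟩, ?_⟩
  rintro t ⟨htmem, htz⟩
  -- uniqueness
  by_contra hne
  have key : ∀ a c : ℝ, a ∈ Set.Icc (0:ℝ) alow → c ∈ Set.Icc (0:ℝ) alow → a < c →
      h a = 0 → h c = 0 → False := by
    intro a c hamem hcmem hac haz hcz
    rw [hh] at haz hcz
    simp only at haz hcz
    have e1 : (b * abar - (alow - a) * (1 + r * a)) * (b + r * ((alow - a) * (1 + r * a)))
        = b ^ 3 * a := by linear_combination haz
    have e2 : (b * abar - (alow - c) * (1 + r * c)) * (b + r * ((alow - c) * (1 + r * c)))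
        = b ^ 3 * c := by linear_combination hcz
    exact nodouble abar alow b r a c ha haa hr hb hba' hamem.1 hac hcmem.2 e1 e2
  rcases lt_trichotomy t τ with hlt | heq | hgt
  · exact key t τ htmem hτmem hlt htz hτz
  · exact hne heq
  · exact key τ t hτmem htmem hgt hτz htz
end

section
/- Let ā ≥ a̲ > 0, r ≥ 0, 0 < b < a̲/ā, and let (u̲_∞, ū_∞) be the unique pair with 0 < u̲_∞ ≤ ū_∞ solving (ā - ū_∞)(1 + r ū_∞) = b u̲_∞ and (a̲ - u̲_∞)(1 + r u̲_∞) = b ū_∞. Then as b → 0⁺ (with ā, a̲, r fixed), u̲_∞ → a̲ and ū_∞ → ā; consequently (1 + 2r u̲_∞ - r a̲)(u̲_∞/ū_∞)^{5/2} → (1 + r a̲)(a̲/ā)^{5/2} > 0, so the stability condition b < (1 + 2r u̲_∞ - r a̲)·(u̲_∞/ū_∞)^{5/2} holds for all sufficiently small b > 0 (when d₁, d₂ are constants). -/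
theorem stmt17 (abar alow r : ℝ) (ha : 0 < alow) (haa : alow ≤ abar) (hr : 0 ≤ r)
    (ul uu : ℝ → ℝ)
    (hsol : ∀ b ∈ Set.Ioo (0:ℝ) (alow / abar),
      0 < ul b ∧ ul b ≤ uu b ∧
      (abar - uu b) * (1 + r * uu b) = b * ul b ∧
      (alow - ul b) * (1 + r * ul b) = b * uu b) :
    Filter.Tendsto ul (nhdsWithin 0 (Set.Ioi 0)) (nhds alow) ∧
    Filter.Tendsto uu (nhdsWithin 0 (Set.Ioi 0)) (nhds abar) ∧
    Filter.Tendsto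
      (fun b => (1 + 2 * r * ul b - r * alow) * (ul b / uu b) ^ ((5:ℝ)/2))
      (nhdsWithin 0 (Set.Ioi 0))
      (nhds ((1 + r * alow) * (alow / abar) ^ ((5:ℝ)/2))) ∧
    0 < (1 + r * alow) * (alow / abar) ^ ((5:ℝ)/2) ∧
    ∀ᶠ b in nhdsWithin 0 (Set.Ioi 0),
      b < (1 + 2 * r * ul b - r * alow) * (ul b / uu b) ^ ((5:ℝ)/2) := by
  have habar : 0 < abar := lt_of_lt_of_le ha haa
  have hba : 0 < alow / abar := div_pos ha habar
  set F := nhdsWithin (0:ℝ) (Set.Ioi 0) with hF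
  have hmem : ∀ᶠ b in F, b ∈ Set.Ioo (0:ℝ) (alow / abar) :=
    Ioo_mem_nhdsGT_of_mem ⟨le_refl 0, hba⟩
  have hbounds : ∀ᶠ b in F,
      alow - b * abar ≤ ul b ∧ ul b ≤ alow ∧
      abar - b * abar ≤ uu b ∧ uu b ≤ abar := by
    refine hmem.mono fun b hb => ?_
    obtain ⟨h1, h2, h3, h4⟩ := hsol b hb
    have hbpos : 0 < b := hb.1
    have huu : 0 < uu b := lt_of_lt_of_le h1 h2
    have hrul : 0 ≤ r * ul b := mul_nonneg hr h1.le
    have hruu : 0 ≤ r * uu b := mul_nonneg hr huu.le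
    have huls : ul b ≤ alow := by nlinarith [mul_pos hbpos huu]
    have huus : uu b ≤ abar := by nlinarith [mul_pos hbpos h1]
    refine ⟨?_, huls, ?_, huus⟩
    · nlinarith [mul_nonneg (mul_nonneg hr h1.le) (sub_nonneg.2 huls),
        mul_le_mul_of_nonneg_left huus hbpos.le]
    · nlinarith [mul_nonneg (mul_nonneg hr huu.le) (sub_nonneg.2 huus),
        mul_le_mul_of_nonneg_left huls hbpos.le,
        mul_le_mul_of_nonneg_left haa hbpos.le]
  have hlowl : Filter.Tendsto (fun b : ℝ => alow - b * abar) F (nhds alow) := by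
    have : Filter.Tendsto (fun b : ℝ => alow - b * abar) (nhds 0) (nhds (alow - 0 * abar)) := by
      exact ((continuous_const.sub (continuous_id.mul continuous_const)).tendsto 0)
    simpa using this.mono_left nhdsWithin_le_nhds
  have hlowu : Filter.Tendsto (fun b : ℝ => abar - b * abar) F (nhds abar) := by
    have : Filter.Tendsto (fun b : ℝ => abar - b * abar) (nhds 0) (nhds (abar - 0 * abar)) := by
      exact ((continuous_const.sub (continuous_id.mul continuous_const)).tendsto 0)
    simpa using this.mono_left nhdsWithin_le_nhds
  have hul : Filter.Tendsto ul F (nhds alow) :=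
    tendsto_of_tendsto_of_tendsto_of_le_of_le' hlowl tendsto_const_nhds
      (hbounds.mono fun b h => h.1) (hbounds.mono fun b h => h.2.1)
  have huu : Filter.Tendsto uu F (nhds abar) :=
    tendsto_of_tendsto_of_tendsto_of_le_of_le' hlowu tendsto_const_nhds
      (hbounds.mono fun b h => h.2.2.1) (hbounds.mono fun b h => h.2.2.2)
  have hratio : Filter.Tendsto (fun b => ul b / uu b) F (nhds (alow / abar)) :=
    hul.div huu habar.ne'
  have hpow : Filter.Tendsto (fun b => (ul b / uu b) ^ ((5:ℝ)/2)) F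
      (nhds ((alow / abar) ^ ((5:ℝ)/2))) :=
    hratio.rpow tendsto_const_nhds (Or.inl hba.ne')
  have hcoef : Filter.Tendsto (fun b => 1 + 2 * r * ul b - r * alow) F
      (nhds (1 + 2 * r * alow - r * alow)) := by
    have h1 : Filter.Tendsto (fun b => (2 * r) * ul b) F (nhds ((2 * r) * alow)) :=
      tendsto_const_nhds.mul hul
    have h2 : Filter.Tendsto (fun b => 1 + 2 * r * ul b) F (nhds (1 + 2 * r * alow)) :=
      tendsto_const_nhds.add h1
    exact h2.sub tendsto_const_nhds
  have hmain : Filter.Tendsto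
      (fun b => (1 + 2 * r * ul b - r * alow) * (ul b / uu b) ^ ((5:ℝ)/2)) F
      (nhds ((1 + r * alow) * (alow / abar) ^ ((5:ℝ)/2))) := by
    have := hcoef.mul hpow
    have heq : 1 + 2 * r * alow - r * alow = 1 + r * alow := by ring
    simpa [heq] using this
  have hLpos : 0 < (1 + r * alow) * (alow / abar) ^ ((5:ℝ)/2) := by
    have h1 : 0 < 1 + r * alow := by nlinarith [mul_nonneg hr ha.le]
    exact mul_pos h1 (Real.rpow_pos_of_pos hba _)
  refine ⟨hul, huu, hmain, hLpos, ?_⟩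
  set L := (1 + r * alow) * (alow / abar) ^ ((5:ℝ)/2)
  have hev1 : ∀ᶠ b in F, L / 2 < (1 + 2 * r * ul b - r * alow) * (ul b / uu b) ^ ((5:ℝ)/2) :=
    hmain.eventually (eventually_gt_nhds (by linarith))
  have hev2 : ∀ᶠ b in F, b < L / 2 :=
    (eventually_lt_nhds (by linarith : (0:ℝ) < L / 2)).filter_mono nhdsWithin_le_nhds
  filter_upwards [hev1, hev2] with b h1 h2
  linarith
end
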